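/- Let n ≥ 2 and let d be a maximal diagonal of the convex (n+3)-gon G_{n+3}. Then the number of diagonals of G_{n+3} crossing d equals q(n), where q(n) = n(n+2)/4 if n is even and q(n) = (n+1)²/4 if n is odd. -/

import Mathlib

/-- A diagonal of the convex `N`-gon with vertices labelled `1, …, N` in cyclic order:
a pair `(i, j)` with `1 ≤ i`, `i + 2 ≤ j ≤ N`, excluding the side `(1, N)`. -/
def IsDiag (N : ℕ) (d : ℕ × ℕ) : Prop :=
  1 ≤ d.1 ∧ d.1 + 2 ≤ d.2 ∧ d.2 ≤ N ∧ ¬(d.1 = 1 ∧ d.2 = N)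

instance (N : ℕ) (d : ℕ × ℕ) : Decidable (IsDiag N d) := by
  unfold IsDiag; infer_instance

/-- Two diagonals of a convex polygon cross (intersect at an interior point). -/
def Crosses (d e : ℕ × ℕ) : Prop :=
  (d.1 < e.1 ∧ e.1 < d.2 ∧ d.2 < e.2) ∨ (e.1 < d.1 ∧ d.1 < e.2 ∧ e.2 < d.2)

instance (d e : ℕ × ℕ) : Decidable (Crosses d e) := by
  unfold Crosses; infer_instance

/-- The finite set of all diagonals of the convex `N`-gon. -/
def Diags (N : ℕ) : Finset (ℕ × ℕ) :=
  (Finset.range (N + 1) ×ˢ Finset.range (N + 1)).filter (IsDiag N)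

/-- `crossNum N d` is the number of diagonals of the convex `N`-gon crossing `d`
(the number `p(d)` of distinguished points on `d`). -/
def crossNum (N : ℕ) (d : ℕ × ℕ) : ℕ :=
  ((Diags N).filter (fun e => Crosses d e)).card

/-- The length of a diagonal of the convex `N`-gon: the smaller of the two numbers of
vertices lying strictly on either side of it. -/
def DiagLen (N : ℕ) (d : ℕ × ℕ) : ℕ :=
  min (d.2 - d.1 - 1) (N - 1 - (d.2 - d.1))

/-- `q n`: the number of distinguished points on a maximal diagonal of the
`(n+3)`-gon; `q(n) = n(n+2)/4` for even `n` and `q(n) = (n+1)²/4` for odd `n`. -/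
def q (n : ℕ) : ℕ := if Even n then n * (n + 2) / 4 else (n + 1) ^ 2 / 4

/-- The number of diagonals crossing a diagonal `d = (a, b)` equals the product of the
numbers of vertices strictly on either side of `d`. -/
lemma crossNum_eq (N : ℕ) (d : ℕ × ℕ) (hd : IsDiag N d) :
    crossNum N d = (d.2 - d.1 - 1) * (N - 1 - (d.2 - d.1)) := by
  obtain ⟨a, b⟩ := d
  obtain ⟨h1, h2, h3, h4⟩ := hd
  simp only at h1 h2 h3 h4 ⊢
  have hset : ((Diags N).filter (fun e => Crosses (a, b) e)) =
      (Finset.Ioo a b ×ˢ Finset.Ioc b N) ∪ (Finset.Ico 1 a ×ˢ Finset.Ioo a b) := by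
    ext ⟨x, y⟩
    rw [Finset.mem_filter]
    simp only [Finset.mem_filter, Diags, Finset.mem_product, Finset.mem_range,
      Finset.mem_union, Finset.mem_Ioo, Finset.mem_Ioc, Finset.mem_Ico,
      IsDiag, Crosses]
    constructor
    · rintro ⟨⟨⟨hx, hy⟩, _, _, _, _⟩, hc | hc⟩ <;> omega
    · rintro (⟨⟨hx1, hx2⟩, hy1, hy2⟩ | ⟨⟨hx1, hx2⟩, hy1, hy2⟩) <;>
      · refine ⟨⟨⟨by omega, by omega⟩, by omega, by omega, by omega, ?_⟩, ?_⟩ <;> omega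
  rw [crossNum, hset, Finset.card_union_of_disjoint, Finset.card_product,
    Finset.card_product, Nat.card_Ioo, Nat.card_Ioc, Nat.card_Ico]
  · have : N - b + (a - 1) = N - 1 - (b - a) := by omega
    rw [← this, Nat.mul_add]
    ring
  · rw [Finset.disjoint_left]
    rintro ⟨x, y⟩ hx hy
    simp only [Finset.mem_product, Finset.mem_Ioo, Finset.mem_Ioc, Finset.mem_Ico] at hx hy
    omega

/-- Arithmetic fact: if `k + (n + 1 - k) = n + 1` and `min k (n + 1 - k) = ⌊(n+1)/2⌋`,
then `k * (n + 1 - k) = q n`. -/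
lemma crossNum_arith (n k : ℕ) (hk : k ≤ n + 1) (h : min k (n + 1 - k) = (n + 1) / 2) :
    k * (n + 1 - k) = q n := by
  rcases Nat.even_or_odd n with ⟨m, rfl⟩ | ⟨m, rfl⟩
  · have hq : q (m + m) = m * (m + 1) := by
      rw [q, if_pos ⟨m, rfl⟩, show (m + m) * (m + m + 2) = m * (m + 1) * 4 by ring,
        Nat.mul_div_cancel]
      norm_num
    have : k = m ∧ m + m + 1 - k = m + 1 ∨ k = m + 1 ∧ m + m + 1 - k = m := by omega
    rcases this with ⟨rfl, h2⟩ | ⟨rfl, h2⟩ <;> rw [h2, hq] <;> ring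
  · have hq : q (2 * m + 1) = (m + 1) * (m + 1) := by
      rw [q, if_neg (by simp [Nat.even_add_one, parity_simps]),
        show (2 * m + 1 + 1) ^ 2 = (m + 1) * (m + 1) * 4 by ring, Nat.mul_div_cancel]
      norm_num
    have : k = m + 1 ∧ 2 * m + 1 + 1 - k = m + 1 := by omega
    rw [this.2, this.1, hq]

/-- Lemma 2.14: a maximal diagonal of the convex `(n+3)`-gon (one of length
`⌊(n+1)/2⌋`, the largest possible) is crossed by exactly `q(n)` diagonals. -/
theorem crossNum_of_maximal (n : ℕ) (hn : 2 ≤ n) (d : ℕ × ℕ)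
    (hd : IsDiag (n + 3) d) (hmax : DiagLen (n + 3) d = (n + 1) / 2) :
    crossNum (n + 3) d = q n := by
  obtain ⟨h1, h2, h3, h4⟩ := hd
  rw [crossNum_eq (n + 3) d ⟨h1, h2, h3, h4⟩]
  have hk : d.2 - d.1 - 1 ≤ n + 1 := by omega
  have h5 : n + 3 - 1 - (d.2 - d.1) = n + 1 - (d.2 - d.1 - 1) := by omega
  rw [h5]
  apply crossNum_arith n _ hk
  rw [← h5]
  rw [DiagLen] at hmax
  exact hmax
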